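/- The autonomous d₄P^(I) map preserves its quintic invariant: for all a, b, c, d, x, y, z, u, x₁ in ℂ with a·x·y ≠ 0, if a·x·y·x₁ = −a·y·(x² + y² + z² + 2yz + 2xy + xz + zu) − b·y·(x + y + z) − c·y + d, then Δ₅(x₁, x, y, z) = Δ₅(x, y, z, u). -/

import Mathlib

/-- The quintic invariant `Δ₅` of the autonomous `d₄P^(I)` map, in affine coordinates. -/
noncomputable def Δ₅ (a b c d x y z u : ℂ) : ℂ :=
  a * y * z * (z*u + x*y + y^2 + 2*y*z + z^2) * (x + y + z + u)
    + b * y * z * (x + y + z) * (u + y + z)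
    + c * y * z * (x + y + z + u)
    - d * (z*u + x*y + y^2 + 2*y*z + z^2)

/-- The autonomous `d₄P^(I)` map preserves its quintic invariant `Δ₅`. -/
theorem d4PI_preserves_Delta5 (a b c d x y z u x₁ : ℂ) (h : a * x * y ≠ 0)
    (hrec : a * x * y * x₁ =
      -a * y * (x^2 + y^2 + z^2 + 2*y*z + 2*x*y + x*z + z*u)
        - b * y * (x + y + z) - c * y + d) :
    Δ₅ a b c d x₁ x y z = Δ₅ a b c d x y z u := by
  have hx1 : x₁ =
      (-a * y * (x^2 + y^2 + z^2 + 2*y*z + 2*x*y + x*z + z*u)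
        - b * y * (x + y + z) - c * y + d) / (a * x * y) := by
    rw [eq_div_iff h]; linear_combination hrec
  subst hx1
  simp only [Δ₅]
  have ha : a ≠ 0 := by intro h0; apply h; simp [h0]
  have hx : x ≠ 0 := by intro h0; apply h; simp [h0]
  have hy : y ≠ 0 := by intro h0; apply h; simp [h0]
  field_simp
  ring
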